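/- For every integer k ≥ 1 there exist pairwise distinct continuous functions f_1, …, f_{2^k} : ℝ → ℝ such that every two of them have at most one common point, no three of them share a common point, and the number of tangent pairs among them is at least k · 2^{k−1}. -/

import Mathlib

namespace St8

open Finset

noncomputable section

def D (j : ℕ) : ℤ := 4 ^ (j + 1)

lemma D_lt {a b : ℕ} (h : a < b) : D a < D b := by
  unfold D
  exact pow_lt_pow_right₀ (by norm_num) (by omega)

lemma fourinj {a b c d : ℕ} (hab : a ≤ b) (hcd : c ≤ d)
    (h : 4 ^ a + 4 ^ b = 4 ^ c + 4 ^ d) : a = c ∧ b = d := by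
  have key : ∀ x y z w : ℕ, x ≤ y → z ≤ w → y < w → 4 ^ x + 4 ^ y ≠ 4 ^ z + 4 ^ w := by
    intro x y z w hxy hzw hyw
    have h1 : 4 ^ x ≤ 4 ^ y := Nat.pow_le_pow_right (by norm_num) hxy
    have h3 : 4 ^ (y + 1) ≤ 4 ^ w := Nat.pow_le_pow_right (by norm_num) (by omega)
    have h4 : 4 ^ (y + 1) = 4 * 4 ^ y := by ring
    have h5 : 0 < (4:ℕ) ^ y := Nat.pow_pos (by norm_num)
    intro h
    have hlt : 4 ^ x + 4 ^ y < 4 ^ z + 4 ^ w := by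
      calc 4 ^ x + 4 ^ y ≤ 4 ^ y + 4 ^ y := by linarith
        _ < 4 * 4 ^ y := by linarith
        _ = 4 ^ (y + 1) := by ring
        _ ≤ 4 ^ w := h3
        _ ≤ 4 ^ z + 4 ^ w := by linarith [Nat.pow_pos (show 0 < 4 by norm_num) (n := z)]
    linarith
  rcases lt_trichotomy b d with hbd | hbd | hbd
  · exact absurd h (key a b c d hab hcd hbd)
  · subst hbd
    have : (4:ℕ) ^ a = 4 ^ c := by omega
    exact ⟨Nat.pow_right_injective (by norm_num) this, rfl⟩
  · exact absurd h.symm (key c d a b hcd hab hbd)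

lemma Dinj {a b c d : ℕ} (hab : a ≤ b) (hcd : c ≤ d)
    (h : D a + D b = D c + D d) : a = c ∧ b = d := by
  have hcast : ((4 ^ (a+1) + 4 ^ (b+1) : ℕ) : ℤ) = ((4 ^ (c+1) + 4 ^ (d+1) : ℕ) : ℤ) := by
    push_cast
    simpa [D] using h
  have := fourinj (a := a+1) (b := b+1) (c := c+1) (d := d+1) (by omega) (by omega)
    (Nat.cast_injective hcast)
  omega

variable {k : ℕ} (t : ℝ)

def AA (σ : Fin k → ℝ) : ℝ := ∑ j, σ j * t ^ D (j : ℕ)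

def CC (σ : Fin k → ℝ) : ℝ := ∑ j, σ j * t ^ (-D (j : ℕ))

def sS (σ : Fin k → ℝ) : ℝ := ∑ j, σ j

def q (σ : Fin k → ℝ) (u : ℝ) : ℝ :=
  ∑ j, σ j * (t ^ D (j : ℕ) * (u - t ^ (-D (j : ℕ))) ^ 2)

def Sg (σ : Fin k → ℝ) : Prop := ∀ j, σ j = -1 ∨ σ j = 0 ∨ σ j = 1

lemma q_expand (ht0 : 0 < t) (σ : Fin k → ℝ) (u : ℝ) :
    q t σ u = AA t σ * u ^ 2 - sS σ * (2 * u) + CC t σ := by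
  have h : ∀ j : Fin k, σ j * (t ^ D (j : ℕ) * (u - t ^ (-D (j : ℕ))) ^ 2)
      = σ j * t ^ D (j : ℕ) * u ^ 2 - σ j * (2 * u) + σ j * t ^ (-D (j : ℕ)) := by
    intro j
    have hb : t ^ D (j : ℕ) * t ^ (-D (j : ℕ)) = 1 := by
      rw [← zpow_add₀ (ne_of_gt ht0)]
      simp
    linear_combination (σ j * (t ^ (-D (j : ℕ)) - 2 * u)) * hb
  rw [q, Finset.sum_congr rfl fun j _ => h j, Finset.sum_add_distrib,
    Finset.sum_sub_distrib, ← Finset.sum_mul, ← Finset.sum_mul]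
  rfl

lemma q_add (σ σ' : Fin k → ℝ) (u : ℝ) :
    q t (σ + σ') u = q t σ u + q t σ' u := by
  rw [q, q, q, ← Finset.sum_add_distrib]
  exact Finset.sum_congr rfl fun j _ => by simp [Pi.add_apply]; ring

lemma q_sub (σ σ' : Fin k → ℝ) (u : ℝ) :
    q t (σ - σ') u = q t σ u - q t σ' u := by
  rw [q, q, q, ← Finset.sum_sub_distrib]
  exact Finset.sum_congr rfl fun j _ => by simp [Pi.sub_apply]; ring

section
variable {k : ℕ} {t : ℝ}

lemma Sg_abs {σ : Fin k → ℝ} (h : Sg σ) (j : Fin k) : |σ j| ≤ 1 := by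
  rcases h j with h' | h' | h' <;> rw [h'] <;> norm_num

lemma dom_bound (ht1 : 1 ≤ t) (E : Fin k → ℤ) (σ : Fin k → ℝ) (hσ : ∀ j, |σ j| ≤ 1)
    (J : Fin k) (hE : ∀ j, σ j ≠ 0 → j ≠ J → E j ≤ E J - 1) :
    |(∑ j, σ j * t ^ E j) - σ J * t ^ E J| ≤ (k : ℝ) * t ^ (E J - 1) := by
  have ht0 : (0:ℝ) < t := lt_of_lt_of_le one_pos ht1
  rw [← Finset.sum_erase_add _ _ (Finset.mem_univ J), add_sub_cancel_right]
  have hbound : ∀ j ∈ Finset.univ.erase J, |σ j * t ^ E j| ≤ t ^ (E J - 1) := by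
    intro j hj
    have hjJ : j ≠ J := (Finset.mem_erase.mp hj).1
    by_cases h0 : σ j = 0
    · rw [h0]; simp [le_of_lt (zpow_pos ht0 _)]
    · rw [abs_mul, abs_of_pos (zpow_pos ht0 (E j))]
      calc |σ j| * t ^ E j ≤ 1 * t ^ E j := by
            exact mul_le_mul_of_nonneg_right (hσ j) (le_of_lt (zpow_pos ht0 _))
        _ = t ^ E j := one_mul _
        _ ≤ t ^ (E J - 1) := zpow_le_zpow_right₀ ht1 (hE j h0 hjJ)
  calc |∑ j ∈ Finset.univ.erase J, σ j * t ^ E j|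
      ≤ ∑ j ∈ Finset.univ.erase J, |σ j * t ^ E j| := Finset.abs_sum_le_sum_abs _ _
    _ ≤ ∑ _j ∈ Finset.univ.erase J, t ^ (E J - 1) := Finset.sum_le_sum hbound
    _ = ((Finset.univ.erase J).card : ℝ) * t ^ (E J - 1) := by
        rw [Finset.sum_const, nsmul_eq_mul]
    _ ≤ (k : ℝ) * t ^ (E J - 1) := by
        apply mul_le_mul_of_nonneg_right _ (le_of_lt (zpow_pos ht0 _))
        have : (Finset.univ.erase J).card ≤ k := by
          simpa using Finset.card_erase_le.trans (le_of_eq (by simp))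
        exact_mod_cast this

lemma sS_abs {σ : Fin k → ℝ} (h : Sg σ) : |sS σ| ≤ (k : ℝ) := by
  calc |sS σ| ≤ ∑ j, |σ j| := Finset.abs_sum_le_sum_abs _ _
    _ ≤ ∑ _j : Fin k, (1:ℝ) := Finset.sum_le_sum (fun j _ => Sg_abs h j)
    _ = (k : ℝ) := by simp

variable (ht : 512 * ((k : ℝ) + 1) ^ 2 ≤ t)
include ht

lemma tpos : (0:ℝ) < t := by nlinarith [sq_nonneg ((k:ℝ) + 1), Nat.cast_nonneg (α := ℝ) k]

lemma t1 : (1:ℝ) ≤ t := by nlinarith [Nat.cast_nonneg (α := ℝ) k]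

lemma kt : (k : ℝ) * 2 ≤ t := by nlinarith [Nat.cast_nonneg (α := ℝ) k]

lemma lemA {σ : Fin k → ℝ} (hSg : Sg σ) (J : Fin k) (hJ : σ J ≠ 0)
    (htop : ∀ i, J < i → σ i = 0) :
    t ^ D (J : ℕ) / 2 ≤ σ J * AA t σ ∧ σ J * AA t σ ≤ 2 * t ^ D (J : ℕ) := by
  have ht0 : (0:ℝ) < t := tpos ht
  have ht1 : (1:ℝ) ≤ t := t1 ht
  have hd := dom_bound ht1 (fun j => D (j : ℕ)) σ (Sg_abs hSg) J ?hE
  case hE =>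
    intro j h0 hjJ
    have hjJ' : (j : ℕ) < (J : ℕ) := by
      rcases lt_trichotomy j J with h | h | h
      · exact h
      · exact absurd h hjJ
      · exact absurd (htop j h) h0
    have := D_lt hjJ'
    show D (j : ℕ) ≤ D (J : ℕ) - 1
    omega
  have hpow1 : (0:ℝ) < t ^ (D (J : ℕ) - 1) := zpow_pos ht0 _
  have hsplit : t ^ (D (J : ℕ) - 1) * t = t ^ D (J : ℕ) := by
    have h2 : t ^ (D (J : ℕ) - 1) * t ^ (1:ℤ) = t ^ D (J : ℕ) := by
      rw [← zpow_add₀ (ne_of_gt ht0)]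
      congr 1
      ring
    simpa using h2
  have hk2 : (k : ℝ) * t ^ (D (J : ℕ) - 1) ≤ t ^ D (J : ℕ) / 2 := by
    rw [← hsplit]
    nlinarith [mul_nonneg (sub_nonneg.mpr (kt ht)) hpow1.le]
  have hsJ : σ J = 1 ∨ σ J = -1 := by
    rcases hSg J with h | h | h
    · exact Or.inr h
    · exact absurd h hJ
    · exact Or.inl h
  have habs := abs_le.mp (le_trans hd hk2)
  have hAA : AA t σ = ∑ j, σ j * t ^ (fun j : Fin k => D (j : ℕ)) j := rfl
  rw [← hAA] at habs
  rcases hsJ with h | h <;> rw [h] at habs ⊢ <;> constructor <;> nlinarith [habs.1, habs.2]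

lemma lemC {σ : Fin k → ℝ} (hSg : Sg σ) (m : Fin k) (hm : σ m ≠ 0)
    (hbot : ∀ i, i < m → σ i = 0) :
    t ^ (-D (m : ℕ)) / 2 ≤ σ m * CC t σ ∧ σ m * CC t σ ≤ 2 * t ^ (-D (m : ℕ)) := by
  have ht0 : (0:ℝ) < t := tpos ht
  have ht1 : (1:ℝ) ≤ t := t1 ht
  have hd := dom_bound ht1 (fun j => -D (j : ℕ)) σ (Sg_abs hSg) m ?hE
  case hE =>
    intro j h0 hjm
    have hjm' : (m : ℕ) < (j : ℕ) := by
      rcases lt_trichotomy j m with h | h | h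
      · exact absurd (hbot j h) h0
      · exact absurd h hjm
      · exact h
    have := D_lt hjm'
    show -D (j : ℕ) ≤ -D (m : ℕ) - 1
    omega
  have hpow1 : (0:ℝ) < t ^ (-D (m : ℕ) - 1) := zpow_pos ht0 _
  have hsplit : t ^ (-D (m : ℕ) - 1) * t = t ^ (-D (m : ℕ)) := by
    have h2 : t ^ (-D (m : ℕ) - 1) * t ^ (1:ℤ) = t ^ (-D (m : ℕ)) := by
      rw [← zpow_add₀ (ne_of_gt ht0)]
      congr 1
      ring
    simpa using h2
  have hk2 : (k : ℝ) * t ^ (-D (m : ℕ) - 1) ≤ t ^ (-D (m : ℕ)) / 2 := by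
    rw [← hsplit]
    nlinarith [mul_nonneg (sub_nonneg.mpr (kt ht)) hpow1.le]
  have hsm : σ m = 1 ∨ σ m = -1 := by
    rcases hSg m with h | h | h
    · exact Or.inr h
    · exact absurd h hm
    · exact Or.inl h
  have habs := abs_le.mp (le_trans hd hk2)
  have hCC : CC t σ = ∑ j, σ j * t ^ (fun j : Fin k => -D (j : ℕ)) j := rfl
  rw [← hCC] at habs
  rcases hsm with h | h <;> rw [h] at habs ⊢ <;> constructor <;> nlinarith [habs.1, habs.2]

end

section
variable {k : ℕ}

lemma struct (σ : Fin k → ℝ) (hne : σ ≠ 0) :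
    ∃ m J : Fin k, σ m ≠ 0 ∧ σ J ≠ 0 ∧ m ≤ J ∧ (∀ i, i < m → σ i = 0) ∧
      (∀ i, J < i → σ i = 0) := by
  have hex : ∃ j, σ j ≠ 0 := by
    by_contra h
    push_neg at h
    exact hne (funext h)
  obtain ⟨j0, hj0⟩ := hex
  set F := Finset.univ.filter (fun j => σ j ≠ 0) with hF
  have hFne : F.Nonempty := ⟨j0, by simp [hF, hj0]⟩
  refine ⟨F.min' hFne, F.max' hFne, ?_, ?_, ?_, ?_, ?_⟩
  · have := F.min'_mem hFne
    simpa [hF] using this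
  · have := F.max'_mem hFne
    simpa [hF] using this
  · exact F.min'_le (F.max' hFne) (F.max'_mem hFne)
  · intro i hi
    by_contra h0
    have : F.min' hFne ≤ i := F.min'_le i (by simp [hF, h0])
    exact absurd (lt_of_le_of_lt this hi) (lt_irrefl _)
  · intro i hi
    by_contra h0
    have : i ≤ F.max' hFne := F.le_max' i (by simp [hF, h0])
    exact absurd (lt_of_le_of_lt this hi) (lt_irrefl _)

end

section
variable {k : ℕ} {t : ℝ}

lemma sign_prod : ∀ x y : ℝ, (x = -1 ∨ x = 0 ∨ x = 1) → (y = -1 ∨ y = 0 ∨ y = 1) →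
    x ≠ 0 → y ≠ 0 → x * y = 1 ∨ x * y = -1 := by
  rintro x y (rfl | rfl | rfl) (rfl | rfl | rfl) hx hy <;> simp_all <;> norm_num

lemma sign_sq : ∀ x : ℝ, (x = -1 ∨ x = 0 ∨ x = 1) → x ≠ 0 → x * x = 1 := by
  rintro x (rfl | rfl | rfl) hx <;> simp_all <;> norm_num

lemma zpow_mul_zpow (ht0 : 0 < t) {a b c : ℤ} (h : a + b = c) :
    t ^ a * t ^ b = t ^ c := by
  rw [← zpow_add₀ (ne_of_gt ht0), h]

lemma single_root (ht0 : 0 < t) {σ : Fin k → ℝ} (m : Fin k) (hm : σ m ≠ 0)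
    (hsupp : ∀ j, j ≠ m → σ j = 0) {u : ℝ} (hq : q t σ u = 0) :
    u = t ^ (-D (m : ℕ)) := by
  have hone : q t σ u = σ m * (t ^ D (m : ℕ) * (u - t ^ (-D (m : ℕ))) ^ 2) := by
    rw [q]
    apply Fintype.sum_eq_single
    intro j hj
    rw [hsupp j hj]
    ring
  rw [hone] at hq
  rcases mul_eq_zero.mp hq with h | h
  · exact absurd h hm
  rcases mul_eq_zero.mp h with h' | h'
  · exact absurd h' (ne_of_gt (zpow_pos ht0 _))
  · have := pow_eq_zero_iff (n := 2) (by norm_num) |>.mp h'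
    linarith [sub_eq_zero.mp this]

variable (ht : 512 * ((k : ℝ) + 1) ^ 2 ≤ t)
include ht

/-- If the extreme signs agree (and m < J), there is no positive root at all. -/
lemma noroot {σ : Fin k → ℝ} (hSg : Sg σ) {m J : Fin k} (hm : σ m ≠ 0) (hJ : σ J ≠ 0)
    (hbot : ∀ i, i < m → σ i = 0) (htop : ∀ i, J < i → σ i = 0) (hmJ : m < J)
    (hpr : σ m * σ J = 1) {u : ℝ} (hq : q t σ u = 0) : False := by
  have ht0 : (0:ℝ) < t := tpos ht
  have ht1 : (1:ℝ) ≤ t := t1 ht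
  have hA := lemA ht hSg J hJ htop
  have hC := lemC ht hSg m hm hbot
  have hss := sS_abs hSg
  have hm2 := sign_sq _ (hSg m) hm
  have hJ2 := sign_sq _ (hSg J) hJ
  set P := t ^ D (J : ℕ) with hPdef
  set Qm := t ^ (-D (m : ℕ)) with hQdef
  have hP : (0:ℝ) < P := zpow_pos ht0 _
  have hQm : (0:ℝ) < Qm := zpow_pos ht0 _
  have hPQ : t ≤ P * Qm := by
    have hPQ' : P * Qm = t ^ (D (J : ℕ) - D (m : ℕ)) :=
      zpow_mul_zpow ht0 (by ring)
    rw [hPQ']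
    calc t = t ^ (1:ℤ) := (zpow_one t).symm
      _ ≤ t ^ (D (J : ℕ) - D (m : ℕ)) := by
          apply zpow_le_zpow_right₀ ht1
          have := D_lt (show (m:ℕ) < (J:ℕ) from hmJ)
          omega
  have h0 : AA t σ * u ^ 2 - sS σ * (2 * u) + CC t σ = 0 := by
    rw [← q_expand t ht0]
    exact hq
  have hACac : AA t σ * CC t σ = (σ J * AA t σ) * (σ m * CC t σ) := by
    linear_combination (-(AA t σ * CC t σ)) * hpr
  have hacl : P / 2 * (Qm / 2) ≤ (σ J * AA t σ) * (σ m * CC t σ) :=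
    mul_le_mul hA.1 hC.1 (by positivity) (by linarith [hA.1, hP])
  have hs2 : sS σ ^ 2 ≤ (k:ℝ) ^ 2 := by
    have h := abs_le.mp hss
    nlinarith [h.1, h.2]
  have hid : (AA t σ * u - sS σ) ^ 2 + (AA t σ * CC t σ - sS σ ^ 2)
      = AA t σ * (AA t σ * u ^ 2 - sS σ * (2 * u) + CC t σ) := by ring
  rw [h0, mul_zero] at hid
  nlinarith [sq_nonneg (AA t σ * u - sS σ), hid, hACac, hacl, hPQ, hs2, ht,
    Nat.cast_nonneg (α := ℝ) k]

set_option maxHeartbeats 2000000 in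
/-- Localization of a positive root of `q σ`. -/
lemma rootloc {σ : Fin k → ℝ} (hSg : Sg σ) (hne : σ ≠ 0)
    {u : ℝ} (hu : 0 < u) (hq : q t σ u = 0) :
    ∃ m J : Fin k, σ m ≠ 0 ∧ σ J ≠ 0 ∧ m ≤ J ∧ (∀ i, i < m → σ i = 0) ∧
      (∀ i, J < i → σ i = 0) ∧
      t ^ (-(D (m : ℕ) + D (J : ℕ))) / 16 ≤ u ^ 2 ∧
      u ^ 2 ≤ 16 * t ^ (-(D (m : ℕ) + D (J : ℕ))) := by
  have ht0 : (0:ℝ) < t := tpos ht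
  have ht1 : (1:ℝ) ≤ t := t1 ht
  obtain ⟨m, J, hm, hJ, hmJ, hbot, htop⟩ := struct σ hne
  refine ⟨m, J, hm, hJ, hmJ, hbot, htop, ?_⟩
  rcases eq_or_lt_of_le hmJ with hcase | hmJlt
  · -- singleton support
    have hsupp : ∀ j, j ≠ m → σ j = 0 := by
      intro j hj
      rcases lt_trichotomy j m with h | h | h
      · exact hbot j h
      · exact absurd h hj
      · exact htop j (hcase ▸ h)
    have hroot := single_root ht0 m hm hsupp hq
    have hu2 : u ^ 2 = t ^ (-(D (m : ℕ) + D (m : ℕ))) := by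
      rw [hroot, pow_two]
      exact zpow_mul_zpow ht0 (by ring)
    rw [← hcase, hu2]
    have : (0:ℝ) < t ^ (-(D (m : ℕ) + D (m : ℕ))) := zpow_pos ht0 _
    constructor <;> nlinarith [this]
  · -- m < J
    have hpr := sign_prod _ _ (hSg m) (hSg J) hm hJ
    rcases hpr with hpr | hpr
    · exact absurd hq (fun hq' => noroot ht hSg hm hJ hbot htop hmJlt hpr hq')
    have hA := lemA ht hSg J hJ htop
    have hC := lemC ht hSg m hm hbot
    have hss := sS_abs hSg
    have hm2 := sign_sq _ (hSg m) hm
    have hJ2 := sign_sq _ (hSg J) hJ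
    have hkpos : (0:ℝ) < (k:ℝ) := by
      have : 0 < k := m.pos
      exact_mod_cast this
    set P := t ^ D (J : ℕ) with hPdef
    set Qm := t ^ (-D (m : ℕ)) with hQdef
    set W := t ^ (-(D (m : ℕ) + D (J : ℕ))) with hWdef
    have hP : (0:ℝ) < P := zpow_pos ht0 _
    have hQm : (0:ℝ) < Qm := zpow_pos ht0 _
    have hW : (0:ℝ) < W := zpow_pos ht0 _
    have hWP : W * P = Qm := zpow_mul_zpow ht0 (by ring)
    have hPQ : t ≤ P * Qm := by
      have hPQ' : P * Qm = t ^ (D (J : ℕ) - D (m : ℕ)) :=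
        zpow_mul_zpow ht0 (by ring)
      rw [hPQ']
      calc t = t ^ (1:ℤ) := (zpow_one t).symm
        _ ≤ t ^ (D (J : ℕ) - D (m : ℕ)) := by
            apply zpow_le_zpow_right₀ ht1
            have := D_lt (show (m:ℕ) < (J:ℕ) from hmJlt)
            omega
    have h0 : AA t σ * u ^ 2 - sS σ * (2 * u) + CC t σ = 0 := by
      rw [← q_expand t ht0]
      exact hq
    set a := σ J * AA t σ with hadef
    set c := σ m * CC t σ with hcdef
    have hJm : σ J = -σ m := by linear_combination σ m * hpr - σ J * hm2
    have hCneg : σ J * CC t σ = -c := by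
      rw [hcdef, hJm]
      ring
    have hrel : a * u ^ 2 - c = (σ J * sS σ) * (2 * u) := by
      have e1 : σ J * (AA t σ * u ^ 2 - sS σ * (2 * u) + CC t σ) = 0 := by
        rw [h0, mul_zero]
      linear_combination e1 - CC t σ * hJm
    have hsb : |σ J * sS σ| ≤ (k:ℝ) := by
      have hJabs : |σ J| = 1 := by
        rcases hSg J with h | h | h
        · rw [h]; norm_num
        · exact absurd h hJ
        · rw [h]; norm_num
      rw [abs_mul, hJabs, one_mul]
      exact sS_abs hSg
    have hs2 := abs_le.mp hsb
    have hApos : (0:ℝ) < a := lt_of_lt_of_le (by positivity) hA.1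
    have hcpos : (0:ℝ) < c := lt_of_lt_of_le (by positivity) hC.1
    clear_value P Qm W a c
    clear hPdef hQdef hWdef hadef hcdef h0 hq hne hCneg hJm hm2 hJ2 hss hsb
    constructor
    · -- lower bound W/16 ≤ u^2
      by_cases hcc : 2 * (k:ℝ) * u ≤ a * u ^ 2
      · have h1 : c ≤ 2 * (a * u ^ 2) := by
          nlinarith [hrel, mul_le_mul_of_nonneg_right hs2.1
            (le_of_lt (show (0:ℝ) < 2 * u by positivity))]
        have h2 : W * P ≤ 8 * (P * u ^ 2) := by
          nlinarith [h1, hC.1, hWP, mul_nonneg (sub_nonneg.mpr hA.2) (sq_nonneg u)]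
        nlinarith [h2, hP, hW, mul_pos hW hP]
      · exfalso
        push_neg at hcc
        have hau : a * u < 2 * (k:ℝ) := by
          have h' : a * u * u < 2 * (k:ℝ) * u := by nlinarith [hcc]
          exact lt_of_mul_lt_mul_right h' hu.le
        have hc4 : c < 4 * (k:ℝ) * u := by
          nlinarith [hrel, mul_le_mul_of_nonneg_right hs2.1
            (le_of_lt (show (0:ℝ) < 2 * u by positivity)), hcc]
        have hca : c * a < 8 * (k:ℝ) ^ 2 := by
          nlinarith [mul_lt_mul_of_pos_right hc4 hApos,
            mul_lt_mul_of_pos_left hau (show (0:ℝ) < 4 * (k:ℝ) by positivity)]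
        have hacl : P / 2 * (Qm / 2) ≤ a * c :=
          mul_le_mul hA.1 hC.1 (by positivity) (le_of_lt hApos)
        nlinarith [hacl, hca, hPQ, ht, hkpos]
    · -- upper bound u^2 ≤ 16 W
      by_cases hcc : 2 * (k:ℝ) * u ≤ c
      · have h1 : a * u ^ 2 ≤ 2 * c := by
          nlinarith [hrel, mul_le_mul_of_nonneg_right hs2.2
            (le_of_lt (show (0:ℝ) < 2 * u by positivity))]
        have h2 : P * u ^ 2 ≤ 16 * (W * P) := by
          nlinarith [h1, hC.2, hWP, mul_nonneg (sub_nonneg.mpr hA.1) (sq_nonneg u)]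
        nlinarith [h2, hP, hW, mul_pos hW hP]
      · push_neg at hcc
        have h1 : a * u ^ 2 ≤ 4 * ((k:ℝ) * u) := by
          nlinarith [hrel, mul_le_mul_of_nonneg_right hs2.2
            (le_of_lt (show (0:ℝ) < 2 * u by positivity)), hcc]
        have h2 : a * u ≤ 4 * (k:ℝ) := by
          have h' : a * u * u ≤ 4 * (k:ℝ) * u := by nlinarith [h1]
          exact le_of_mul_le_mul_right (by nlinarith [h']) hu
        have h3 : P * u ≤ 8 * (k:ℝ) := by
          nlinarith [h2, mul_nonneg (sub_nonneg.mpr hA.1) hu.le]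
        have h4 : P ^ 2 * u ^ 2 ≤ 64 * (k:ℝ) ^ 2 := by
          nlinarith [mul_nonneg (sub_nonneg.mpr h3)
            (by positivity : (0:ℝ) ≤ 8 * (k:ℝ) + P * u), mul_nonneg hP.le hu.le]
        have h5 : 64 * (k:ℝ) ^ 2 ≤ 16 * (W * P ^ 2) := by
          have hQP : W * P ^ 2 = Qm * P := by
            rw [← hWP]
            ring
          rw [hQP]
          nlinarith [hPQ, ht, hkpos, mul_pos hP hQm]
        nlinarith [h4, h5, hW, pow_pos hP 2, mul_pos hW (pow_pos hP 2)]

omit ht in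
lemma sign_opp : ∀ x y : ℝ, (x = -1 ∨ x = 0 ∨ x = 1) → (y = -1 ∨ y = 0 ∨ y = 1) →
    x ≠ 0 → y ≠ 0 → x * y ≤ 0 → y = -x := by
  rintro x y (rfl | rfl | rfl) (rfl | rfl | rfl) hx hy hxy <;>
    first
      | exact absurd rfl hx
      | exact absurd rfl hy
      | (revert hxy; norm_num)

omit ht in
lemma sign_add : ∀ x y : ℝ, (x = -1 ∨ x = 0 ∨ x = 1) → (y = -1 ∨ y = 0 ∨ y = 1) →
    x * y ≤ 0 → (x + y = -1 ∨ x + y = 0 ∨ x + y = 1) := by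
  rintro x y (rfl | rfl | rfl) (rfl | rfl | rfl) hxy <;>
    (revert hxy; norm_num)

set_option maxHeartbeats 1000000 in
/-- Uniqueness of the positive common point. -/
lemma key1 {σ : Fin k → ℝ} (hSg : Sg σ) (hne : σ ≠ 0) {u1 u2 : ℝ}
    (h1 : 0 < u1) (h2 : 0 < u2) (hq1 : q t σ u1 = 0) (hq2 : q t σ u2 = 0) :
    u1 = u2 := by
  have ht0 : (0:ℝ) < t := tpos ht
  obtain ⟨m, J, hm, hJ, hmJ, hbot, htop⟩ := struct σ hne
  rcases eq_or_lt_of_le hmJ with hcase | hmJlt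
  · have hsupp : ∀ j, j ≠ m → σ j = 0 := by
      intro j hj
      rcases lt_trichotomy j m with h | h | h
      · exact hbot j h
      · exact absurd h hj
      · exact htop j (hcase ▸ h)
    rw [single_root ht0 m hm hsupp hq1, single_root ht0 m hm hsupp hq2]
  · rcases sign_prod _ _ (hSg m) (hSg J) hm hJ with hpr | hpr
    · exact absurd hq1 fun h => noroot ht hSg hm hJ hbot htop hmJlt hpr h
    · by_contra hne12
      have hA := lemA ht hSg J hJ htop
      have hC := lemC ht hSg m hm hbot
      have h01 : AA t σ * u1 ^ 2 - sS σ * (2 * u1) + CC t σ = 0 := by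
        rw [← q_expand t ht0]; exact hq1
      have h02 : AA t σ * u2 ^ 2 - sS σ * (2 * u2) + CC t σ = 0 := by
        rw [← q_expand t ht0]; exact hq2
      have hfac : (u1 - u2) * (AA t σ * (u1 + u2) - 2 * sS σ) = 0 := by
        linear_combination h01 - h02
      have hsum : AA t σ * (u1 + u2) - 2 * sS σ = 0 :=
        (mul_eq_zero.mp hfac).resolve_left (sub_ne_zero.mpr hne12)
      have hCval : CC t σ - AA t σ * (u1 * u2) = 0 := by
        linear_combination h01 - u1 * hsum
      have hApos' : 0 < σ J * AA t σ := lt_of_lt_of_le (by positivity) hA.1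
      have hcpos' : 0 < σ m * CC t σ := lt_of_lt_of_le (by positivity) hC.1
      have hid : (σ J * AA t σ) * (σ m * CC t σ) = (σ m * σ J) * (AA t σ * CC t σ) := by
        ring
      rw [hpr] at hid
      have hACneg : AA t σ * CC t σ < 0 := by nlinarith [mul_pos hApos' hcpos']
      have hAC2 : AA t σ * CC t σ = AA t σ ^ 2 * (u1 * u2) := by
        linear_combination AA t σ * hCval
      have hAAne : AA t σ ≠ 0 := by
        intro h0
        rw [h0, mul_zero] at hApos'
        exact lt_irrefl _ hApos'
      nlinarith [mul_pos h1 h2, pow_pos (abs_pos.mpr hAAne) 2, sq_abs (AA t σ)]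

set_option maxHeartbeats 1000000 in
/-- Two opposed sign-vectors have no common positive root. -/
lemma no_common {σ σ' : Fin k → ℝ} (hSg : Sg σ) (hSg' : Sg σ') (hne : σ ≠ 0)
    (hne' : σ' ≠ 0) (hopp : ∀ j, σ j * σ' j ≤ 0) (hsum : σ + σ' ≠ 0) {u : ℝ}
    (hu : 0 < u) (h1 : q t σ u = 0) (h2 : q t σ' u = 0) : False := by
  have ht0 : (0:ℝ) < t := tpos ht
  have ht1 : (1:ℝ) ≤ t := t1 ht
  have h512 : (512:ℝ) ≤ t := by nlinarith [Nat.cast_nonneg (α := ℝ) k]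
  have hsep : ∀ S S' : ℤ, t ^ (-S) / 16 ≤ u ^ 2 → u ^ 2 ≤ 16 * t ^ (-S') → S ≤ S' → S = S' := by
    intro S S' hl hu2 hle
    by_contra hne''
    have hlt : (-S' : ℤ) ≤ -S - 1 := by
      have : S < S' := lt_of_le_of_ne hle hne''
      omega
    have hmono : t ^ (-S') ≤ t ^ (-S - 1) := zpow_le_zpow_right₀ ht1 hlt
    have hsplit : t ^ (-S - 1) * t = t ^ (-S) := by
      have h' := zpow_mul_zpow ht0 (a := -S - 1) (b := 1) (c := -S) (by ring)
      simpa using h'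
    have hp1 : (0:ℝ) < t ^ (-S - 1) := zpow_pos ht0 _
    nlinarith [hl, hu2, hmono, hsplit, hp1, h512]
  obtain ⟨m, J, hm, hJ, hmJ, hbot, htop, hw1l, hw1u⟩ := rootloc ht hSg hne hu h1
  obtain ⟨m', J', hm', hJ', hmJ', hbot', htop', hw2l, hw2u⟩ := rootloc ht hSg' hne' hu h2
  have hSeq : D (m : ℕ) + D (J : ℕ) = D (m' : ℕ) + D (J' : ℕ) := by
    rcases le_total (D (m : ℕ) + D (J : ℕ)) (D (m' : ℕ) + D (J' : ℕ)) with h | h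
    · exact hsep _ _ hw1l hw2u h
    · exact (hsep _ _ hw2l hw1u h).symm
  obtain ⟨hmm', hJJ'⟩ := Dinj (show (m : ℕ) ≤ (J : ℕ) from hmJ)
    (show (m' : ℕ) ≤ (J' : ℕ) from hmJ') hSeq
  have hmeq : m' = m := Fin.ext hmm'.symm
  have hJeq : J' = J := Fin.ext hJJ'.symm
  rw [hmeq] at hm' hbot'
  rw [hJeq] at hJ' htop'
  have hopp_m : σ' m = -σ m := sign_opp _ _ (hSg m) (hSg' m) hm hm' (hopp m)
  rcases eq_or_lt_of_le hmJ with hcase | hmJlt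
  · apply hsum
    funext j
    show σ j + σ' j = 0
    by_cases hj : j = m
    · rw [hj, hopp_m]; ring
    · have hz : σ j = 0 := by
        rcases lt_trichotomy j m with h | h | h
        · exact hbot j h
        · exact absurd h hj
        · exact htop j (hcase ▸ h)
      have hz' : σ' j = 0 := by
        rcases lt_trichotomy j m with h | h | h
        · exact hbot' j h
        · exact absurd h hj
        · exact htop' j (hcase ▸ h)
      rw [hz, hz', add_zero]
  · have hSgτ : Sg (σ + σ') := by
      intro j
      exact sign_add _ _ (hSg j) (hSg' j) (hopp j)
    have hqτ : q t (σ + σ') u = 0 := by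
      rw [q_add, h1, h2, add_zero]
    obtain ⟨m'', J'', hm'', hJ'', hmJ'', hbot'', htop'', hwl'', hwu''⟩ :=
      rootloc ht hSgτ hsum hu hqτ
    have hSeq2 : D (m'' : ℕ) + D (J'' : ℕ) = D (m : ℕ) + D (J : ℕ) := by
      rcases le_total (D (m'' : ℕ) + D (J'' : ℕ)) (D (m : ℕ) + D (J : ℕ)) with h | h
      · exact hsep _ _ hwl'' hw1u h
      · exact (hsep _ _ hw1l hwu'' h).symm
    obtain ⟨hmm'', hJJ''⟩ := Dinj (show (m'' : ℕ) ≤ (J'' : ℕ) from hmJ'')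
      (show (m : ℕ) ≤ (J : ℕ) from hmJ) hSeq2
    have hmeq2 : m'' = m := Fin.ext hmm''
    rw [hmeq2] at hm''
    apply hm''
    show σ m + σ' m = 0
    rw [hopp_m]
    ring

end

end

end St8

/-- Two bi-infinite `x`-monotone curves (graphs of continuous functions `ℝ → ℝ`) are
tangent (touching) if they have exactly one common point and their difference does not
change sign. -/
def Tangent (f g : ℝ → ℝ) : Prop :=
  (∃! x, f x = g x) ∧ ((∀ x, f x ≤ g x) ∨ (∀ x, g x ≤ f x))

open St8 in
set_option maxHeartbeats 2000000 in
theorem stmt8 (k : ℕ) (hk : 1 ≤ k) :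
    ∃ f : Fin (2 ^ k) → ℝ → ℝ,
      (∀ i, Continuous (f i)) ∧
      Function.Injective f ∧
      (∀ i j : Fin (2 ^ k), i ≠ j → {x : ℝ | f i x = f j x}.Subsingleton) ∧
      (¬ ∃ (x : ℝ) (i j l : Fin (2 ^ k)), i ≠ j ∧ j ≠ l ∧ i ≠ l ∧
        f i x = f j x ∧ f j x = f l x) ∧
      k * 2 ^ (k - 1) ≤
        {p : Fin (2 ^ k) × Fin (2 ^ k) | p.1 < p.2 ∧ Tangent (f p.1) (f p.2)}.ncard := by
  classical
  obtain ⟨K, rfl⟩ : ∃ K, k = K + 1 := ⟨k - 1, by omega⟩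
  set t : ℝ := 512 * (((K + 1 : ℕ) : ℝ) + 1) ^ 2 with htdef
  have ht : 512 * (((K + 1 : ℕ) : ℝ) + 1) ^ 2 ≤ t := le_of_eq htdef.symm
  have ht0 : (0:ℝ) < t := tpos ht
  set e : (Fin (K + 1) → Fin 2) ≃ Fin (2 ^ (K + 1)) := finFunctionFinEquiv with hedef
  set εv : Fin (2 ^ (K + 1)) → Fin (K + 1) → ℝ :=
    fun i j => ((e.symm i j : ℕ) : ℝ) with hεdef
  set f : Fin (2 ^ (K + 1)) → ℝ → ℝ :=
    fun i x => St8.q t (εv i) (Real.exp x) with hfdef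
  have heps : ∀ i j, εv i j = 0 ∨ εv i j = 1 := by
    intro i j
    have h2 : (e.symm i j : ℕ) = 0 ∨ (e.symm i j : ℕ) = 1 := by
      have := (e.symm i j).isLt
      omega
    rcases h2 with h | h
    · left; rw [hεdef]; norm_num [h]
    · right; rw [hεdef]; norm_num [h]
  have hSgd : ∀ i i', Sg (εv i - εv i') := by
    intro i i' j
    rcases heps i j with h | h <;> rcases heps i' j with h' | h' <;>
      simp only [Pi.sub_apply, h, h'] <;> norm_num
  have hdne : ∀ i i', i ≠ i' → εv i - εv i' ≠ 0 := by
    intro i i' hne h0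
    apply hne
    apply e.symm.injective
    funext j
    have hj : εv i j - εv i' j = 0 := by
      have := congrFun h0 j
      simpa using this
    have hcast : ((e.symm i j : ℕ) : ℝ) = ((e.symm i' j : ℕ) : ℝ) := by
      rw [hεdef] at hj
      simpa [sub_eq_zero] using hj
    exact Fin.ext (Nat.cast_injective hcast)
  refine ⟨f, ?_, ?_, ?_, ?_, ?_⟩
  · -- continuity
    intro i
    rw [hfdef]
    apply continuous_finset_sum
    intro j _
    exact continuous_const.mul
      (continuous_const.mul ((Real.continuous_exp.sub continuous_const).pow 2))
  · -- injectivity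
    intro i i' hfe
    by_contra hne
    have hsub : {x : ℝ | f i x = f i' x}.Subsingleton := by
      intro x1 hx1 x2 hx2
      simp only [Set.mem_setOf_eq] at hx1 hx2
      have hq1 : St8.q t (εv i - εv i') (Real.exp x1) = 0 := by
        rw [q_sub]
        have : f i x1 - f i' x1 = 0 := sub_eq_zero_of_eq hx1
        simpa [hfdef] using this
      have hq2 : St8.q t (εv i - εv i') (Real.exp x2) = 0 := by
        rw [q_sub]
        have : f i x2 - f i' x2 = 0 := sub_eq_zero_of_eq hx2
        simpa [hfdef] using this
      have := key1 ht (hSgd i i') (hdne i i' hne) (Real.exp_pos x1) (Real.exp_pos x2) hq1 hq2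
      exact Real.exp_injective this
    have h01 : (0:ℝ) = 1 := hsub (by simp [Set.mem_setOf_eq, hfe]) (by simp [Set.mem_setOf_eq, hfe])
    norm_num at h01
  · -- pairwise subsingleton
    intro i i' hne x1 hx1 x2 hx2
    simp only [Set.mem_setOf_eq] at hx1 hx2
    have hq1 : St8.q t (εv i - εv i') (Real.exp x1) = 0 := by
      rw [q_sub]
      have : f i x1 - f i' x1 = 0 := sub_eq_zero_of_eq hx1
      simpa [hfdef] using this
    have hq2 : St8.q t (εv i - εv i') (Real.exp x2) = 0 := by
      rw [q_sub]
      have : f i x2 - f i' x2 = 0 := sub_eq_zero_of_eq hx2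
      simpa [hfdef] using this
    have := key1 ht (hSgd i i') (hdne i i' hne) (Real.exp_pos x1) (Real.exp_pos x2) hq1 hq2
    exact Real.exp_injective this
  · -- no triple point
    rintro ⟨x, i, j, l, hij, hjl, hil, e1, e2⟩
    have hq1 : St8.q t (εv i - εv j) (Real.exp x) = 0 := by
      rw [q_sub]
      have : f i x - f j x = 0 := sub_eq_zero_of_eq e1
      simpa [hfdef] using this
    have hq2 : St8.q t (εv j - εv l) (Real.exp x) = 0 := by
      rw [q_sub]
      have : f j x - f l x = 0 := sub_eq_zero_of_eq e2
      simpa [hfdef] using this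
    have hopp : ∀ j0, (εv i - εv j) j0 * (εv j - εv l) j0 ≤ 0 := by
      intro j0
      rcases heps i j0 with h1 | h1 <;> rcases heps j j0 with h2 | h2 <;>
        rcases heps l j0 with h3 | h3 <;>
        simp only [Pi.sub_apply, h1, h2, h3] <;> norm_num
    have hsumeq : (εv i - εv j) + (εv j - εv l) = εv i - εv l := by
      funext j0
      simp only [Pi.add_apply, Pi.sub_apply]
      ring
    have hsum : (εv i - εv j) + (εv j - εv l) ≠ 0 := by
      rw [hsumeq]
      exact hdne i l hil
    exact no_common ht (hSgd i j) (hSgd j l) (hdne i j hij) (hdne j l hjl) hopp hsum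
      (Real.exp_pos x) hq1 hq2
  · -- tangency count
    set T := {p : Fin (2 ^ (K + 1)) × Fin (2 ^ (K + 1)) |
      p.1 < p.2 ∧ Tangent (f p.1) (f p.2)} with hTdef
    set e2 : (Fin K → Fin 2) ≃ Fin (2 ^ K) := finFunctionFinEquiv with he2def
    set Φ : Fin (K + 1) × Fin (2 ^ K) → Fin (2 ^ (K + 1)) × Fin (2 ^ (K + 1)) :=
      fun p => (e (p.1.insertNth 0 (e2.symm p.2)), e (p.1.insertNth 1 (e2.symm p.2)))
      with hΦdef
    have hev : ∀ v : Fin (K + 1) → Fin 2, εv (e v) = fun j0 => ((v j0 : ℕ) : ℝ) := by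
      intro v
      funext j0
      show ((e.symm (e v) j0 : ℕ) : ℝ) = ((v j0 : ℕ) : ℝ)
      rw [e.symm_apply_apply]
    have hΦinj : Function.Injective Φ := by
      rintro ⟨j, c⟩ ⟨j', c'⟩ hpq
      rw [hΦdef] at hpq
      have h0 : j.insertNth 0 (e2.symm c) = j'.insertNth 0 (e2.symm c') :=
        e.injective (congrArg Prod.fst hpq)
      have h1 : j.insertNth 1 (e2.symm c) = j'.insertNth 1 (e2.symm c') :=
        e.injective (congrArg Prod.snd hpq)
      have hjj : j = j' := by
        by_contra hne
        obtain ⟨z, hz⟩ := Fin.exists_succAbove_eq (Ne.symm hne)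
        have c0 := congrFun h0 j'
        have c1 := congrFun h1 j'
        rw [← hz, Fin.insertNth_apply_succAbove] at c0 c1
        rw [hz, Fin.insertNth_apply_same] at c0 c1
        rw [c0] at c1
        exact absurd c1 (by decide)
      subst hjj
      have hcc : e2.symm c = e2.symm c' := by
        funext z
        have := congrFun h0 (j.succAbove z)
        rwa [Fin.insertNth_apply_succAbove, Fin.insertNth_apply_succAbove] at this
      have : c = c' := e2.symm.injective hcc
      rw [this]
    have himg : ∀ p, Φ p ∈ T := by
      rintro ⟨j, c⟩
      set w := e2.symm c with hwdef
      set v0 : Fin (K + 1) → Fin 2 := j.insertNth (0 : Fin 2) w with hv0def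
      set v1 : Fin (K + 1) → Fin 2 := j.insertNth (1 : Fin 2) w with hv1def
      have hoff : ∀ i, i ≠ j → v0 i = v1 i := by
        intro i hi
        obtain ⟨z, hz⟩ := Fin.exists_succAbove_eq hi
        rw [← hz, hv0def, hv1def, Fin.insertNth_apply_succAbove,
          Fin.insertNth_apply_succAbove]
      have hatj0 : v0 j = 0 := by simp [hv0def]
      have hatj1 : v1 j = 1 := by simp [hv1def]
      have hδ0 : ∀ i, i ≠ j → (εv (e v1) - εv (e v0)) i = 0 := by
        intro i hi
        rw [Pi.sub_apply, hev, hev]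
        show ((v1 i : ℕ) : ℝ) - ((v0 i : ℕ) : ℝ) = 0
        rw [hoff i hi]
        ring
      have hδj : (εv (e v1) - εv (e v0)) j = 1 := by
        rw [Pi.sub_apply, hev, hev]
        show ((v1 j : ℕ) : ℝ) - ((v0 j : ℕ) : ℝ) = 1
        rw [hatj0, hatj1]
        norm_num
      have hδ : ∀ x : ℝ, f (e v1) x - f (e v0) x
          = t ^ D (j : ℕ) * (Real.exp x - t ^ (-D (j : ℕ))) ^ 2 := by
        intro x
        have hq' : f (e v1) x - f (e v0) x
            = St8.q t (εv (e v1) - εv (e v0)) (Real.exp x) := by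
          rw [q_sub, hfdef]
        rw [hq', St8.q]
        rw [Fintype.sum_eq_single j (fun i hi => by rw [hδ0 i hi, zero_mul])]
        rw [hδj, one_mul]
      constructor
      · -- strict order of the pair
        show e v0 < e v1
        rw [Fin.lt_def]
        have hval : ∀ v : Fin (K + 1) → Fin 2,
            ((e v : Fin (2 ^ (K + 1))) : ℕ) = ∑ i, (v i : ℕ) * 2 ^ (i : ℕ) := by
          intro v
          rw [hedef]
          exact finFunctionFinEquiv_apply v
        rw [hval, hval]
        rw [← Finset.sum_erase_add _ _ (Finset.mem_univ j),
          ← Finset.sum_erase_add _ _ (Finset.mem_univ j)]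
        have hsame : ∑ i ∈ Finset.univ.erase j, ((v0 i : ℕ) * 2 ^ (i : ℕ))
            = ∑ i ∈ Finset.univ.erase j, ((v1 i : ℕ) * 2 ^ (i : ℕ)) :=
          Finset.sum_congr rfl fun i hi => by rw [hoff i (Finset.mem_erase.mp hi).1]
        rw [hsame, hatj0, hatj1]
        have h2p : 0 < 2 ^ (j : ℕ) := Nat.pow_pos (by norm_num)
        simp only [Fin.val_zero, Fin.val_one, zero_mul, one_mul, add_zero]
        omega
      · -- tangency
        show Tangent (f (e v0)) (f (e v1))
        have hb0 : (0:ℝ) < t ^ (-D (j : ℕ)) := zpow_pos ht0 _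
        constructor
        · refine ⟨Real.log (t ^ (-D (j : ℕ))), ?_, ?_⟩
          · have h' := hδ (Real.log (t ^ (-D (j : ℕ))))
            rw [Real.exp_log hb0, sub_self] at h'
            have : f (e v1) (Real.log (t ^ (-D (j : ℕ))))
                - f (e v0) (Real.log (t ^ (-D (j : ℕ)))) = 0 := by
              rw [h']
              ring
            linarith [this]
          · intro y hy
            have h0' : t ^ D (j : ℕ) * (Real.exp y - t ^ (-D (j : ℕ))) ^ 2 = 0 := by
              rw [← hδ y]
              have : f (e v0) y = f (e v1) y := hy
              linarith [this]
            have hsq : (Real.exp y - t ^ (-D (j : ℕ))) ^ 2 = 0 := by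
              rcases mul_eq_zero.mp h0' with h | h
              · exact absurd h (ne_of_gt (zpow_pos ht0 _))
              · exact h
            have hexp : Real.exp y = t ^ (-D (j : ℕ)) := by
              have := pow_eq_zero_iff (n := 2) (by norm_num) |>.mp hsq
              linarith [sub_eq_zero.mp this]
            rw [← hexp, Real.log_exp]
        · left
          intro x
          have h' := hδ x
          have hnn : (0:ℝ) ≤ t ^ D (j : ℕ) * (Real.exp x - t ^ (-D (j : ℕ))) ^ 2 := by
            positivity
          linarith [h', hnn]
    have hsub : Set.range Φ ⊆ T := by
      rintro _ ⟨p, rfl⟩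
      exact himg p
    have hcard : (Set.range Φ).ncard = (K + 1) * 2 ^ K := by
      rw [← Nat.card_coe_set_eq, Nat.card_range_of_injective hΦinj]
      simp [Nat.card_eq_fintype_card]
    have hfin : T.Finite := Set.toFinite T
    calc (K + 1) * 2 ^ (K + 1 - 1) = (K + 1) * 2 ^ K := by norm_num
      _ = (Set.range Φ).ncard := hcard.symm
      _ ≤ T.ncard := Set.ncard_le_ncard hsub hfin
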